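/- Let f : ℝ^d → ℝ be L-smooth, let x ∈ ℝ^d, let 0 < γ ≤ 1/(4L), and let C, δ, σ ≥ 0 and N ≥ 1. Let ĝ and ḡ be random vectors in ℝ^d with E[ḡ] = ∇f(x), E[‖ĝ − ḡ‖²] ≤ C·δ·σ², and E[‖ĝ‖²] ≤ 2C·δ·σ² + 2‖∇f(x)‖² + 2σ²/N. Then E[f(x − γĝ)] ≤ f(x) − (γ/4)·‖∇f(x)‖² + 2γ·C·δ·σ² + L·γ²·σ²/N. -/

import Mathlib

open MeasureTheory ProbabilityTheory

noncomputable section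

lemma smooth_taylor_bound {d : ℕ} (f : EuclideanSpace ℝ (Fin d) → ℝ) (L : ℝ) (hL : 0 ≤ L)
    (hdiff : Differentiable ℝ f)
    (hsmooth : ∀ x y, ‖gradient f x - gradient f y‖ ≤ L * ‖x - y‖)
    (x v : EuclideanSpace ℝ (Fin d)) :
    |f (x + v) - f x - (inner ℝ (gradient f x) v : ℝ)| ≤ L / 2 * ‖v‖ ^ 2 := by
  have hgradcont : Continuous (gradient f) := by
    have : LipschitzWith (Real.toNNReal L) (gradient f) :=
      LipschitzWith.of_dist_le_mul (fun a b => by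
        simpa [dist_eq_norm, Real.coe_toNNReal L hL] using hsmooth a b)
    exact this.continuous
  have hpath : ∀ t : ℝ, HasDerivAt (fun t : ℝ => x + t • v) v t := fun t => by
    simpa using ((hasDerivAt_id t).smul_const v).const_add x
  have hderiv : ∀ t : ℝ, HasDerivAt (fun t : ℝ => f (x + t • v))
      (inner ℝ (gradient f (x + t • v)) v : ℝ) t := fun t => by
    have h1 := (hdiff (x + t • v)).hasGradientAt.hasFDerivAt
    have h2 := h1.comp_hasDerivAt t (hpath t)
    exact h2.congr_deriv (by simp [InnerProductSpace.toDual_apply_apply])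
  have hcont : Continuous fun t : ℝ => (inner ℝ (gradient f (x + t • v)) v : ℝ) :=
    (hgradcont.comp (continuous_const.add (continuous_id.smul continuous_const))).inner
      continuous_const
  have hint : IntervalIntegrable (fun t : ℝ => (inner ℝ (gradient f (x + t • v)) v : ℝ))
      MeasureTheory.volume 0 1 := hcont.intervalIntegrable 0 1
  have heq : f (x + v) - f x = ∫ t in (0:ℝ)..1, (inner ℝ (gradient f (x + t • v)) v : ℝ) := by
    have := intervalIntegral.integral_eq_sub_of_hasDerivAt
      (f := fun t : ℝ => f (x + t • v)) (fun t _ => hderiv t) hint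
    simpa using this.symm
  have hsub : f (x + v) - f x - (inner ℝ (gradient f x) v : ℝ)
      = ∫ t in (0:ℝ)..1, (inner ℝ (gradient f (x + t • v) - gradient f x) v : ℝ) := by
    have h2 : ∫ t in (0:ℝ)..1,
          ((inner ℝ (gradient f (x + t • v)) v : ℝ) - (inner ℝ (gradient f x) v : ℝ))
        = (∫ t in (0:ℝ)..1, (inner ℝ (gradient f (x + t • v)) v : ℝ))
            - (inner ℝ (gradient f x) v : ℝ) := by
      rw [intervalIntegral.integral_sub hint intervalIntegrable_const]; simp
    rw [heq, ← h2]
    congr 1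
    funext t
    rw [inner_sub_left]
  rw [hsub]
  have hbd : ∀ t ∈ Set.Icc (0:ℝ) 1,
      |(inner ℝ (gradient f (x + t • v) - gradient f x) v : ℝ)| ≤ (L * ‖v‖ ^ 2) * t := by
    intro t ht
    calc |(inner ℝ (gradient f (x + t • v) - gradient f x) v : ℝ)|
        ≤ ‖gradient f (x + t • v) - gradient f x‖ * ‖v‖ := abs_real_inner_le_norm _ _
      _ ≤ (L * ‖(x + t • v) - x‖) * ‖v‖ :=
          mul_le_mul_of_nonneg_right (hsmooth _ _) (norm_nonneg _)
      _ = (L * ‖v‖ ^ 2) * t := by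
          rw [add_sub_cancel_left, norm_smul, Real.norm_eq_abs, abs_of_nonneg ht.1]
          ring
  have habs : |∫ t in (0:ℝ)..1, (inner ℝ (gradient f (x + t • v) - gradient f x) v : ℝ)|
      ≤ ∫ t in (0:ℝ)..1, |(inner ℝ (gradient f (x + t • v) - gradient f x) v : ℝ)| :=
    intervalIntegral.abs_integral_le_integral_abs zero_le_one
  have hcont2 : Continuous fun t : ℝ =>
      |(inner ℝ (gradient f (x + t • v) - gradient f x) v : ℝ)| :=
    (((hgradcont.comp (continuous_const.add (continuous_id.smul continuous_const))).sub
      continuous_const).inner continuous_const).abs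
  have hmono : (∫ t in (0:ℝ)..1, |(inner ℝ (gradient f (x + t • v) - gradient f x) v : ℝ)|)
      ≤ ∫ t in (0:ℝ)..1, (L * ‖v‖ ^ 2) * t := by
    apply intervalIntegral.integral_mono_on zero_le_one (hcont2.intervalIntegrable 0 1)
      ((continuous_const.mul continuous_id).intervalIntegrable 0 1)
    exact hbd
  have hval : (∫ t in (0:ℝ)..1, (L * ‖v‖ ^ 2) * t) = L / 2 * ‖v‖ ^ 2 := by
    rw [intervalIntegral.integral_const_mul, integral_id]
    ring
  calc |∫ t in (0:ℝ)..1, (inner ℝ (gradient f (x + t • v) - gradient f x) v : ℝ)|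
      ≤ ∫ t in (0:ℝ)..1, |(inner ℝ (gradient f (x + t • v) - gradient f x) v : ℝ)| := habs
    _ ≤ ∫ t in (0:ℝ)..1, (L * ‖v‖ ^ 2) * t := hmono
    _ = L / 2 * ‖v‖ ^ 2 := hval

set_option maxHeartbeats 1000000 in
/-- One-step descent inequality for SGD driven by a robustly aggregated
gradient estimate `ĝ`: if `f` is `L`-smooth, `0 < γ ≤ 1/(4L)`, `E[ḡ] = ∇f(x)`,
`E[‖ĝ − ḡ‖²] ≤ Cδσ²` and `E[‖ĝ‖²] ≤ 2Cδσ² + 2‖∇f(x)‖² + 2σ²/N`, then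
`E[f(x − γĝ)] ≤ f(x) − (γ/4)‖∇f(x)‖² + 2γCδσ² + Lγ²σ²/N`. -/
theorem btard_sgd_one_step_descent
    {Ω : Type*} [MeasurableSpace Ω] (P : Measure Ω) [IsProbabilityMeasure P]
    {d : ℕ} (f : EuclideanSpace ℝ (Fin d) → ℝ) (L : ℝ) (hL : 0 < L)
    (hdiff : Differentiable ℝ f)
    (hsmooth : ∀ x y, ‖gradient f x - gradient f y‖ ≤ L * ‖x - y‖)
    (x : EuclideanSpace ℝ (Fin d)) (γ C δ σ : ℝ) (N : ℕ) (hN : 1 ≤ N)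
    (hγ : 0 < γ) (hγL : γ ≤ 1 / (4 * L)) (hC : 0 ≤ C) (hδ : 0 ≤ δ) (hσ : 0 ≤ σ)
    (ghat gbar : Ω → EuclideanSpace ℝ (Fin d))
    (hghatmeas : AEStronglyMeasurable ghat P) (hgbarmeas : AEStronglyMeasurable gbar P)
    (hghatint : Integrable ghat P) (hgbarint : Integrable gbar P)
    (hdevint : Integrable (fun ω => ‖ghat ω - gbar ω‖ ^ 2) P)
    (hsecint : Integrable (fun ω => ‖ghat ω‖ ^ 2) P)
    (hmean : ∫ ω, gbar ω ∂P = gradient f x)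
    (hdev : ∫ ω, ‖ghat ω - gbar ω‖ ^ 2 ∂P ≤ C * δ * σ ^ 2)
    (hsec : ∫ ω, ‖ghat ω‖ ^ 2 ∂P
      ≤ 2 * C * δ * σ ^ 2 + 2 * ‖gradient f x‖ ^ 2 + 2 * σ ^ 2 / N) :
    ∫ ω, f (x - γ • ghat ω) ∂P
      ≤ f x - (γ / 4) * ‖gradient f x‖ ^ 2 + 2 * γ * C * δ * σ ^ 2 + L * γ ^ 2 * σ ^ 2 / N := by
  set G := gradient f x with hGdef
  set Δ := ∫ ω, (ghat ω - gbar ω) ∂P with hΔdef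
  have hK : (0:ℝ) ≤ C * δ * σ ^ 2 := by positivity
  have hdiffint : Integrable (fun ω => ghat ω - gbar ω) P := hghatint.sub hgbarint
  have hghat_mean : ∫ ω, ghat ω ∂P = G + Δ := by
    rw [hΔdef, integral_sub hghatint hgbarint, hmean]; abel
  -- Cauchy–Schwarz / variance: ‖Δ‖² ≤ Cδσ²
  have hmeas_h : AEStronglyMeasurable (fun ω => ‖ghat ω - gbar ω‖) P :=
    (hghatmeas.sub hgbarmeas).norm
  have hmem : MemLp (fun ω => ‖ghat ω - gbar ω‖) 2 P :=
    (memLp_two_iff_integrable_sq hmeas_h).mpr hdevint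
  have hvar := variance_nonneg (fun ω => ‖ghat ω - gbar ω‖) P
  rw [variance_eq_sub hmem] at hvar
  simp only [Pi.pow_apply] at hvar
  have hΔsq : ‖Δ‖ ^ 2 ≤ C * δ * σ ^ 2 := by
    have h1 : ‖Δ‖ ≤ ∫ ω, ‖ghat ω - gbar ω‖ ∂P := norm_integral_le_integral_norm _
    have h2 : ‖Δ‖ ^ 2 ≤ (∫ ω, ‖ghat ω - gbar ω‖ ∂P) ^ 2 :=
      pow_le_pow_left₀ (norm_nonneg _) h1 2
    linarith
  -- pointwise upper bound
  have hub : ∀ ω, f (x - γ • ghat ω)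
      ≤ f x - γ * (inner ℝ G (ghat ω) : ℝ) + L / 2 * γ ^ 2 * ‖ghat ω‖ ^ 2 := by
    intro ω
    have := smooth_taylor_bound f L hL.le hdiff hsmooth x (-(γ • ghat ω))
    rw [← sub_eq_add_neg] at this
    have h1 := (abs_le.mp this).2
    have h2 : (inner ℝ G (-(γ • ghat ω)) : ℝ) = -(γ * (inner ℝ G (ghat ω) : ℝ)) := by
      rw [inner_neg_right, real_inner_smul_right]
    have h3 : ‖-(γ • ghat ω)‖ ^ 2 = γ ^ 2 * ‖ghat ω‖ ^ 2 := by
      rw [norm_neg, norm_smul, Real.norm_eq_abs, mul_pow, sq_abs]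
    rw [h2, h3] at h1
    nlinarith [h1]
  -- pointwise absolute bound (for integrability)
  have habs : ∀ ω, ‖f (x - γ • ghat ω)‖
      ≤ |f x| + γ * ‖G‖ * ‖ghat ω‖ + L / 2 * γ ^ 2 * ‖ghat ω‖ ^ 2 := by
    intro ω
    have := smooth_taylor_bound f L hL.le hdiff hsmooth x (-(γ • ghat ω))
    rw [← sub_eq_add_neg] at this
    have h2 : |(inner ℝ G (-(γ • ghat ω)) : ℝ)| ≤ γ * ‖G‖ * ‖ghat ω‖ := by
      calc |(inner ℝ G (-(γ • ghat ω)) : ℝ)| ≤ ‖G‖ * ‖-(γ • ghat ω)‖ :=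
            abs_real_inner_le_norm _ _
        _ = γ * ‖G‖ * ‖ghat ω‖ := by
            rw [norm_neg, norm_smul, Real.norm_eq_abs, abs_of_pos hγ]; ring
    have h3 : ‖-(γ • ghat ω)‖ ^ 2 = γ ^ 2 * ‖ghat ω‖ ^ 2 := by
      rw [norm_neg, norm_smul, Real.norm_eq_abs, mul_pow, sq_abs]
    rw [h3] at this
    rw [Real.norm_eq_abs]
    have key : f (x - γ • ghat ω)
        = (f x + (inner ℝ G (-(γ • ghat ω)) : ℝ))
          + (f (x - γ • ghat ω) - f x - (inner ℝ G (-(γ • ghat ω)) : ℝ)) := by ring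
    calc |f (x - γ • ghat ω)|
        = |(f x + (inner ℝ G (-(γ • ghat ω)) : ℝ))
            + (f (x - γ • ghat ω) - f x - (inner ℝ G (-(γ • ghat ω)) : ℝ))| := by rw [← key]
      _ ≤ |f x + (inner ℝ G (-(γ • ghat ω)) : ℝ)|
            + |f (x - γ • ghat ω) - f x - (inner ℝ G (-(γ • ghat ω)) : ℝ)| := abs_add_le _ _
      _ ≤ |f x| + γ * ‖G‖ * ‖ghat ω‖ + L / 2 * γ ^ 2 * ‖ghat ω‖ ^ 2 := by
          have h5 := abs_add_le (f x) (inner ℝ G (-(γ • ghat ω)) : ℝ)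
          linarith
  -- integrability
  have hintf : Integrable (fun ω => f (x - γ • ghat ω)) P := by
    apply Integrable.mono' (g := fun ω =>
      |f x| + γ * ‖G‖ * ‖ghat ω‖ + L / 2 * γ ^ 2 * ‖ghat ω‖ ^ 2)
    · exact ((integrable_const _).add ((hghatint.norm.const_mul _))).add
        (hsecint.const_mul _)
    · exact hdiff.continuous.comp_aestronglyMeasurable
        (aestronglyMeasurable_const.sub (hghatmeas.const_smul γ))
    · exact Filter.Eventually.of_forall habs
  have hintφ : Integrable (fun ω =>
      f x - γ * (inner ℝ G (ghat ω) : ℝ) + L / 2 * γ ^ 2 * ‖ghat ω‖ ^ 2) P :=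
    ((integrable_const _).sub ((hghatint.const_inner G).const_mul γ)).add
      (hsecint.const_mul _)
  have hstep : ∫ ω, f (x - γ • ghat ω) ∂P
      ≤ f x - γ * (inner ℝ G (G + Δ) : ℝ) + L / 2 * γ ^ 2 * ∫ ω, ‖ghat ω‖ ^ 2 ∂P := by
    calc ∫ ω, f (x - γ • ghat ω) ∂P
        ≤ ∫ ω, (f x - γ * (inner ℝ G (ghat ω) : ℝ) + L / 2 * γ ^ 2 * ‖ghat ω‖ ^ 2) ∂P :=
          integral_mono hintf hintφ hub
      _ = f x - γ * (inner ℝ G (G + Δ) : ℝ) + L / 2 * γ ^ 2 * ∫ ω, ‖ghat ω‖ ^ 2 ∂P := by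
          have hc : Integrable (fun ω => f x - γ * (inner ℝ G (ghat ω) : ℝ)) P :=
            (integrable_const _).sub ((hghatint.const_inner G).const_mul γ)
          have hq : Integrable (fun ω => L / 2 * γ ^ 2 * ‖ghat ω‖ ^ 2) P :=
            hsecint.const_mul _
          have hd : Integrable (fun ω => γ * (inner ℝ G (ghat ω) : ℝ)) P :=
            (hghatint.const_inner G).const_mul γ
          rw [integral_add hc hq, integral_sub (integrable_const (f x)) hd,
            integral_const, integral_const_mul, integral_const_mul,
            integral_inner hghatint, hghat_mean]
          simp
  -- final arithmetic
  have hinner : (inner ℝ G (G + Δ) : ℝ) = ‖G‖ ^ 2 + (inner ℝ G Δ : ℝ) := by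
    rw [inner_add_right, real_inner_self_eq_norm_sq]
  have hiΔ : -(‖G‖ * ‖Δ‖) ≤ (inner ℝ G Δ : ℝ) :=
    neg_le_of_abs_le (abs_real_inner_le_norm _ _)
  have hLγ : γ * (4 * L) ≤ 1 := (le_div_iff₀ (by positivity)).mp hγL
  have hNpos : (1:ℝ) ≤ (N:ℝ) := by exact_mod_cast hN
  have hSn : (0:ℝ) ≤ 2 * σ ^ 2 / N := by positivity
  have hA := hsec
  rw [hinner] at hstep
  have h1 : (0:ℝ) ≤ 1 - γ * (4 * L) := by linarith
  have e1 : L / 2 * γ ^ 2 * ∫ ω, ‖ghat ω‖ ^ 2 ∂P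
      ≤ L / 2 * γ ^ 2 * (2 * C * δ * σ ^ 2 + 2 * ‖G‖ ^ 2 + 2 * σ ^ 2 / N) :=
    mul_le_mul_of_nonneg_left hA (by positivity)
  have e23 : -(γ * (inner ℝ G Δ : ℝ)) ≤ γ * ‖G‖ ^ 2 / 2 + γ * (C * δ * σ ^ 2) / 2 := by
    have hb : ‖G‖ * ‖Δ‖ ≤ ‖G‖ ^ 2 / 2 + ‖Δ‖ ^ 2 / 2 := by nlinarith [sq_nonneg (‖G‖ - ‖Δ‖)]
    have hc2 : -(inner ℝ G Δ : ℝ) ≤ ‖G‖ ^ 2 / 2 + C * δ * σ ^ 2 / 2 := by linarith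
    have := mul_le_mul_of_nonneg_left hc2 hγ.le
    nlinarith [this]
  have e5 : L * γ ^ 2 * ‖G‖ ^ 2 ≤ γ / 4 * ‖G‖ ^ 2 := by
    nlinarith [mul_nonneg h1 (mul_nonneg hγ.le (sq_nonneg ‖G‖))]
  have e6 : L * γ ^ 2 * (C * δ * σ ^ 2) ≤ γ / 4 * (C * δ * σ ^ 2) := by
    nlinarith [mul_nonneg h1 (mul_nonneg hγ.le hK)]
  have e7 : 0 ≤ γ * (C * δ * σ ^ 2) := mul_nonneg hγ.le hK
  have e8 : L / 2 * γ ^ 2 * (2 * C * δ * σ ^ 2 + 2 * ‖G‖ ^ 2 + 2 * σ ^ 2 / N)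
      = L * γ ^ 2 * (C * δ * σ ^ 2) + L * γ ^ 2 * ‖G‖ ^ 2 + L * γ ^ 2 * σ ^ 2 / N := by
    ring
  rw [e8] at e1
  linarith [hstep, e1, e23, e5, e6, e7]
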